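/- Let (≤₁, τ : S → Fin n) and (≤₂, τ̃ : S → Fin n′) be pruned 2-trees on a finite set S, and suppose there is a morphism from (≤₁, τ) to (≤₂, τ̃) inducing the identity on S. Then FN_{(≤₂,τ̃)} is contained in the closure of FN_{(≤₁,τ)} in Conf(S). If moreover (≤₂, τ̃) ≠ (≤₁, τ), then FN_{(≤₂,τ̃)} is disjoint from FN_{(≤₁,τ)}, and hence FN_{(≤₂,τ̃)} is contained in the frontier (topological boundary) of FN_{(≤₁,τ)}. -/

import Mathlib

/-- The configuration space `Conf S`: the set of injective maps (configurations)
`p : S → ℝ × ℝ`, as a subset of the product space `S → ℝ × ℝ`. -/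
def Conf (S : Type*) : Set (S → ℝ × ℝ) := {p | Function.Injective p}

/-- Condition (I) on a surjection `σ`: consecutive values are distinct. -/
def CondI {S : Type*} {k : ℕ} (σ : Fin k → S) : Prop :=
  ∀ i j : Fin k, (j : ℕ) = (i : ℕ) + 1 → σ i ≠ σ j

/-- Condition (II): no interleaving pattern `i₁ < j₁ < i₂ < j₂` with
`i₁, i₂ ∈ σ⁻¹(s)` and `j₁, j₂ ∈ σ⁻¹(s')` for `s ≠ s'`. -/
def CondII {S : Type*} {k : ℕ} (σ : Fin k → S) : Prop :=
  ¬ ∃ (s s' : S) (i₁ j₁ i₂ j₂ : Fin k),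
      s ≠ s' ∧ i₁ < j₁ ∧ j₁ < i₂ ∧ i₂ < j₂ ∧
      σ i₁ = s ∧ σ i₂ = s ∧ σ j₁ = s' ∧ σ j₂ = s'

/-- `σ ∈ D(S, N)`: a surjection `σ : {1, …, N + |S|} → S` satisfying (I) and (II).
(The condition `k = N + |S|` is imposed as a separate hypothesis in the theorems.) -/
def MemD {S : Type*} {k : ℕ} (σ : Fin k → S) : Prop :=
  Function.Surjective σ ∧ CondI σ ∧ CondII σ

/-- Condition (C1) on a configuration `p`: if some element of `σ⁻¹(s)` lies strictly
between two elements of `σ⁻¹(s')` (for `s ≠ s'`) then `x_s < x_{s'}`. -/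
def CondC1 {S : Type*} {k : ℕ} (σ : Fin k → S) (p : S → ℝ × ℝ) : Prop :=
  ∀ s s' : S, s ≠ s' →
    (∃ i j₁ j₂ : Fin k, σ i = s ∧ σ j₁ = s' ∧ σ j₂ = s' ∧ j₁ < i ∧ i < j₂) →
    (p s).1 < (p s').1

/-- Condition (C2) on a configuration `p`: if `x_s = x_{s'}` (for `s ≠ s'`) and every
element of `σ⁻¹(s)` is smaller than every element of `σ⁻¹(s')` then `y_s < y_{s'}`. -/
def CondC2 {S : Type*} {k : ℕ} (σ : Fin k → S) (p : S → ℝ × ℝ) : Prop :=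
  ∀ s s' : S, s ≠ s' → (p s).1 = (p s').1 →
    (∀ i j : Fin k, σ i = s → σ j = s' → i < j) →
    (p s).2 < (p s').2

/-- A pruned 2-tree on `S`: a linear order `r` (as a `≤`-relation) together with a
surjection `τ : S → Fin n` which is monotone with respect to `r`. -/
def IsPruned2Tree {S : Type*} {n : ℕ} (r : S → S → Prop) (τ : S → Fin n) : Prop :=
  IsLinearOrder S r ∧ Function.Surjective τ ∧ ∀ s s', r s s' → τ s ≤ τ s'

/-- The Fox–Neuwirth cell of a 2-tree `(r, τ)`: configurations `p` such that
(i) `τ s < τ s'` implies `x_s < x_{s'}`, and (ii) `τ s = τ s'` and `s <₁ s'`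
imply `x_s = x_{s'}` and `y_s < y_{s'}`. -/
def FNcell {S : Type*} {n : ℕ} (r : S → S → Prop) (τ : S → Fin n) :
    Set (S → ℝ × ℝ) :=
  {p | Function.Injective p ∧
    (∀ s s', τ s < τ s' → (p s).1 < (p s').1) ∧
    (∀ s s', τ s = τ s' → r s s' → s ≠ s' →
      (p s).1 = (p s').1 ∧ (p s).2 < (p s').2)}

/-- `σ ∈ D(τ, N)`: the additional conditions (B) and (C) relative to the 2-tree
`(r, τ)` (conditions (I), (II) and surjectivity, i.e. `σ ∈ D(S, N)`, are imposed
separately). -/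
def MemDtree {S : Type*} {n k : ℕ} (r : S → S → Prop) (τ : S → Fin n)
    (σ : Fin k → S) : Prop :=
  (∀ s s' : S, s ≠ s' →
      (∃ i j₁ j₂ : Fin k, σ i = s ∧ σ j₁ = s' ∧ σ j₂ = s' ∧ j₁ < i ∧ i < j₂) →
      τ s < τ s') ∧
  (∀ s s' : S, τ s = τ s' → r s s' → s ≠ s' →
      ∀ i j : Fin k, σ i = s → σ j = s' → i < j)

/-- A morphism of pruned 2-trees on `S` from `(r, τ)` to `(r', τ')` inducing the
identity on `S`: a monotone map `P : Fin n → Fin n'` with `τ' = P ∘ τ` such that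
`τ s = τ s'` and `s <₁ s'` imply `s <₂ s'`. -/
def TreeMorphism {S : Type*} {n n' : ℕ} (r : S → S → Prop) (τ : S → Fin n)
    (r' : S → S → Prop) (τ' : S → Fin n') : Prop :=
  ∃ P : Fin n → Fin n', Monotone P ∧ (∀ s, τ' s = P (τ s)) ∧
    ∀ s s' : S, τ s = τ s' → r s s' → s ≠ s' → r' s s'


section Statement6Aux

variable {S : Type*} {n n' : ℕ}

/-- In a Fox–Neuwirth cell, points in the same column have equal `x`-coordinates. -/
private lemma fn_x_eq {r' : S → S → Prop} {τ' : S → Fin n'} (hlin' : IsLinearOrder S r')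
    {p : S → ℝ × ℝ} (hp : p ∈ FNcell r' τ') {s s' : S} (h : τ' s = τ' s') :
    (p s).1 = (p s').1 := by
  haveI := hlin'
  rcases eq_or_ne s s' with rfl | hne
  · rfl
  · rcases total_of r' s s' with hr | hr
    · exact (hp.2.2 s s' h hr hne).1
    · exact ((hp.2.2 s' s h.symm hr hne.symm).1).symm

/-- The perturbed configuration lies in the cell of the finer tree. -/
private lemma perturb_mem {r : S → S → Prop} {τ : S → Fin n} {r' : S → S → Prop}
    {τ' : S → Fin n'} (hlin : IsLinearOrder S r) (hlin' : IsLinearOrder S r')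
    {P : Fin n → Fin n'} (hP : Monotone P) (hPτ : ∀ s, τ' s = P (τ s))
    (hrr' : ∀ s s' : S, τ s = τ s' → r s s' → s ≠ s' → r' s s')
    {p : S → ℝ × ℝ} (hp : p ∈ FNcell r' τ') {ε : ℝ} (hε : 0 < ε) :
    (fun s => ((p s).1 + ε * (τ s : ℕ), (p s).2)) ∈ FNcell r τ := by
  haveI := hlin
  haveI := hlin'
  have hx : ∀ s s' : S, τ s < τ s' →
      (p s).1 + ε * (τ s : ℕ) < (p s').1 + ε * (τ s' : ℕ) := by
    intro s s' hlt
    have hcast : (ε * (τ s : ℕ) : ℝ) < ε * (τ s' : ℕ) := by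
      have : ((τ s : ℕ) : ℝ) < ((τ s' : ℕ) : ℝ) := by exact_mod_cast hlt
      exact mul_lt_mul_of_pos_left this hε
    rcases lt_or_eq_of_le (hP hlt.le) with hPlt | hPeq
    · have hxlt : (p s).1 < (p s').1 := by
        apply hp.2.1 s s'
        rw [hPτ s, hPτ s']; exact hPlt
      exact add_lt_add hxlt hcast
    · have hxeq : (p s).1 = (p s').1 := by
        apply fn_x_eq hlin' hp
        rw [hPτ s, hPτ s', hPeq]
      rw [hxeq]
      exact add_lt_add_right hcast _
  have hy : ∀ s s' : S, τ s = τ s' → r s s' → s ≠ s' →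
      (p s).1 + ε * (τ s : ℕ) = (p s').1 + ε * (τ s' : ℕ) ∧ (p s).2 < (p s').2 := by
    intro s s' heq hr hne
    have hr' : r' s s' := hrr' s s' heq hr hne
    have hτ' : τ' s = τ' s' := by rw [hPτ s, hPτ s', heq]
    obtain ⟨hxeq, hylt⟩ := hp.2.2 s s' hτ' hr' hne
    refine ⟨by rw [hxeq, heq], hylt⟩
  refine ⟨?_, hx, hy⟩
  intro s s' hq
  by_contra hne
  have hq' : (((p s).1 + ε * ((τ s : ℕ) : ℝ), (p s).2) : ℝ × ℝ) =
      ((p s').1 + ε * ((τ s' : ℕ) : ℝ), (p s').2) := hq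
  rw [Prod.mk.injEq] at hq'
  obtain ⟨hq1, hq2⟩ := hq' 
  rcases lt_trichotomy (τ s) (τ s') with hlt | heq | hgt
  · exact absurd hq1 (ne_of_lt (hx s s' hlt))
  · rcases total_of r s s' with hr | hr
    · exact absurd hq2 (ne_of_lt (hy s s' heq hr hne).2)
    · exact absurd hq2.symm (ne_of_lt (hy s' s heq.symm hr (Ne.symm hne)).2)
  · exact absurd hq1.symm (ne_of_lt (hx s' s hgt))

end Statement6Aux

/-- If there is a morphism of pruned 2-trees `(r, τ) → (r', τ')`
inducing the identity on `S`, then `FN_{(r',τ')}` is contained in the closure of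
`FN_{(r,τ)}` in `Conf(S)`; if moreover the two trees are distinct, then the two cells
are disjoint and `FN_{(r',τ')}` lies in the frontier of `FN_{(r,τ)}` in `Conf(S)`. -/
theorem statement6 {S : Type*} [Fintype S] {n n' : ℕ}
    (r : S → S → Prop) (τ : S → Fin n) (r' : S → S → Prop) (τ' : S → Fin n')
    (h : IsPruned2Tree r τ) (h' : IsPruned2Tree r' τ')
    (hom : TreeMorphism r τ r' τ') :
    ({q : ↥(Conf S) | (q : S → ℝ × ℝ) ∈ FNcell r' τ'} ⊆
        closure {q : ↥(Conf S) | (q : S → ℝ × ℝ) ∈ FNcell r τ}) ∧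
    (¬ (r = r' ∧ ∀ s, (τ s : ℕ) = (τ' s : ℕ)) →
        Disjoint (FNcell r' τ') (FNcell r τ) ∧
        {q : ↥(Conf S) | (q : S → ℝ × ℝ) ∈ FNcell r' τ'} ⊆
          frontier {q : ↥(Conf S) | (q : S → ℝ × ℝ) ∈ FNcell r τ}) := by
  obtain ⟨hlin, hτsurj, hmono⟩ := h
  obtain ⟨hlin', hτ'surj, hmono'⟩ := h'
  obtain ⟨P, hP, hPτ, hrr'⟩ := hom
  haveI := hlin
  haveI := hlin'
  -- closure part
  have hclos : {q : ↥(Conf S) | (q : S → ℝ × ℝ) ∈ FNcell r' τ'} ⊆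
      closure {q : ↥(Conf S) | (q : S → ℝ × ℝ) ∈ FNcell r τ} := by
    intro q hq
    rw [closure_subtype]
    have hsub : FNcell r τ ⊆ Subtype.val '' {q : ↥(Conf S) | (q : S → ℝ × ℝ) ∈ FNcell r τ} := by
      intro f hf
      exact ⟨⟨f, hf.1⟩, hf, rfl⟩
    refine closure_mono hsub ?_
    set p : S → ℝ × ℝ := (q : S → ℝ × ℝ) with hpdef
    have hp : p ∈ FNcell r' τ' := hq
    have htend : Filter.Tendsto (fun ε : ℝ => fun s => ((p s).1 + ε * (τ s : ℕ), (p s).2))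
        (nhdsWithin 0 (Set.Ioi 0)) (nhds p) := by
      apply Filter.Tendsto.mono_left _ nhdsWithin_le_nhds
      rw [tendsto_pi_nhds]
      intro s
      have hc : Continuous (fun ε : ℝ => (((p s).1 + ε * (τ s : ℕ), (p s).2) : ℝ × ℝ)) := by
        fun_prop
      have := hc.tendsto 0
      simpa using this
    refine mem_closure_of_tendsto htend ?_
    filter_upwards [eventually_mem_nhdsWithin] with ε hε
    exact perturb_mem hlin hlin' hP hPτ hrr' hp hε
  refine ⟨hclos, ?_⟩
  intro hne
  have hdisj : Disjoint (FNcell r' τ') (FNcell r τ) := by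
    rw [Set.disjoint_left]
    intro p hp' hp
    apply hne
    -- the τ's agree on values
    have hτlt : ∀ a b : S, τ a < τ b → τ' a < τ' b := by
      intro a b hab
      have hxlt : (p a).1 < (p b).1 := hp.2.1 a b hab
      rcases lt_trichotomy (τ' a) (τ' b) with h1 | h1 | h1
      · exact h1
      · exact absurd (fn_x_eq hlin' hp' h1) (ne_of_lt hxlt)
      · exact absurd (hp'.2.1 b a h1) (not_lt_of_gt hxlt)
    have hτ'lt : ∀ a b : S, τ' a < τ' b → τ a < τ b := by
      intro a b hab
      have hxlt : (p a).1 < (p b).1 := hp'.2.1 a b hab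
      rcases lt_trichotomy (τ a) (τ b) with h1 | h1 | h1
      · exact h1
      · exact absurd (fn_x_eq hlin hp (by rw [h1])) (ne_of_lt hxlt)
      · exact absurd (hp.2.1 b a h1) (not_lt_of_gt hxlt)
    -- strictly monotone surjective comparison map
    set g : Fin n → S := Function.surjInv hτsurj with hgdef
    have hg : ∀ i, τ (g i) = i := fun i => Function.surjInv_eq hτsurj i
    set F : Fin n → Fin n' := fun i => τ' (g i) with hFdef
    have hFsm : StrictMono F := by
      intro i j hij
      apply hτlt
      rw [hg i, hg j]; exact hij
    have hτ'eq : ∀ a b : S, τ a = τ b → τ' a = τ' b := by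
      intro a b hab; rw [hPτ a, hPτ b, hab]
    have hFτ : ∀ s, F (τ s) = τ' s := by
      intro s
      apply hτ'eq
      exact hg (τ s)
    have hFsurj : Function.Surjective F := by
      intro j
      obtain ⟨s, rfl⟩ := hτ'surj j
      exact ⟨τ s, hFτ s⟩
    have hcard : n = n' := by
      have := Fintype.card_of_bijective ⟨hFsm.injective, hFsurj⟩
      simpa using this
    subst hcard
    have hFval : (Fin.val ∘ F) = Fin.val := by
      have h1 : StrictMono (Fin.val ∘ F) := (Fin.val_strictMono (n := n)).comp hFsm
      haveI : WellFoundedLT (Fin n) := inferInstance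
      have key := StrictMono.range_inj (β := Fin n) (γ := ℕ)
        (f := Fin.val ∘ F) (g := Fin.val) h1 (Fin.val_strictMono (n := n))
      apply key.1
      rw [Set.range_comp, Set.range_eq_univ.2 hFsurj, Set.image_univ]
    have hvals : ∀ s, (τ s : ℕ) = (τ' s : ℕ) := by
      intro s
      have := congrFun hFval (τ s)
      simp only [Function.comp_apply] at this
      rw [← hFτ s, this]
    have hτeqiff : ∀ a b : S, τ a = τ b ↔ τ' a = τ' b := by
      intro a b
      constructor
      · exact hτ'eq a b
      · intro hab
        exact Fin.ext (by rw [hvals a, hvals b, hab])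
    -- orders agree
    have hreq : r = r' := by
      funext a b
      apply propext
      constructor
      · intro hr
        by_contra hnr'
        rcases total_of r' a b with h1 | h1
        · exact hnr' h1
        · have hne2 : a ≠ b := by
            rintro rfl; exact hnr' (refl_of r' a)
          have h2 : τ a ≤ τ b := hmono a b hr
          have h3 : τ b ≤ τ a := by
            have := hmono' b a h1
            rw [Fin.le_def] at this ⊢
            rwa [hvals a, hvals b]
          have h4 : τ a = τ b := le_antisymm h2 h3
          have h5 : τ' b = τ' a := (hτ'eq a b h4).symm
          have hy1 : (p a).2 < (p b).2 := (hp.2.2 a b h4 hr hne2).2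
          have hy2 : (p b).2 < (p a).2 := (hp'.2.2 b a h5 h1 hne2.symm).2
          exact absurd hy2 (not_lt_of_gt hy1)
      · intro hr'
        by_contra hnr
        rcases total_of r a b with h1 | h1
        · exact hnr h1
        · have hne2 : a ≠ b := by
            rintro rfl; exact hnr (refl_of r a)
          have h2 : τ b ≤ τ a := hmono b a h1
          have h3 : τ a ≤ τ b := by
            have := hmono' a b hr'
            rw [Fin.le_def] at this ⊢
            rwa [hvals a, hvals b]
          have h4 : τ b = τ a := le_antisymm h2 h3
          have h5 : τ' a = τ' b := hτ'eq a b h4.symm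
          have hy1 : (p b).2 < (p a).2 := (hp.2.2 b a h4 h1 hne2.symm).2
          have hy2 : (p a).2 < (p b).2 := (hp'.2.2 a b h5 hr' hne2).2
          exact absurd hy2 (not_lt_of_gt hy1)
    exact ⟨hreq, hvals⟩
  refine ⟨hdisj, ?_⟩
  intro q hq
  rw [frontier_eq_closure_inter_closure]
  constructor
  · exact hclos hq
  · rw [mem_closure_iff]
    intro o ho hqo
    refine ⟨q, hqo, ?_⟩
    intro hqmem
    exact Set.disjoint_left.mp hdisj hq hqmem
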